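/- The function φ(α) = −α·log2(α) − (1−α)·log2(1−α) − (1+2α)/2 has exactly one zero in the open interval (0, 1/2). That is, the equation −α·log2(α) − (1−α)·log2(1−α) = (1+2α)/2 has a unique solution α_0 with 0 < α_0 < 1/2. -/

import Mathlib

noncomputable def phi : ℝ → ℝ := fun α =>
  -α * Real.logb 2 α - (1 - α) * Real.logb 2 (1 - α) - (1 + 2 * α) / 2

lemma log2_pos : 0 < Real.log 2 := Real.log_pos one_lt_two

lemma phi_eq (α : ℝ) : phi α =
    (-(α * Real.log α) - (1 - α) * Real.log (1 - α)) / Real.log 2 - (1 + 2 * α) / 2 := by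
  simp [phi, Real.logb, div_eq_mul_inv]; ring

lemma xlog {y : ℝ} (hy : 0 < y) :
    HasDerivAt (fun y : ℝ => y * Real.log y) (Real.log y + 1) y := by
  have := (hasDerivAt_id' y).mul (Real.hasDerivAt_log hy.ne')
  refine this.congr_deriv ?_
  field_simp

lemma hasDerivAt_phi {α : ℝ} (h0 : 0 < α) (h1 : α < 1) :
    HasDerivAt phi ((Real.log (1 - α) - Real.log α) / Real.log 2 - 1) α := by
  have h1' : (0:ℝ) < 1 - α := by linarith
  have hx : HasDerivAt (fun x : ℝ => x * Real.log x) (Real.log α + 1) α := xlog h0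
  have hu : HasDerivAt (fun x : ℝ => 1 - x) (-1) α := by
    simpa using (hasDerivAt_id' α).const_sub (1:ℝ)
  have hy : HasDerivAt (fun x : ℝ => (1 - x) * Real.log (1 - x))
      ((Real.log (1 - α) + 1) * (-1)) α := (xlog h1').comp α hu
  have hlin : HasDerivAt (fun x : ℝ => (1 + 2 * x) / 2) 1 α := by
    have := ((hasDerivAt_const α (1:ℝ)).add ((hasDerivAt_id' α).const_mul 2)).div_const 2
    refine this.congr_deriv ?_; norm_num
  have hh := ((hx.neg.sub hy).div_const (Real.log 2)).sub hlin
  have hphi : phi = fun x : ℝ =>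
      (-(x * Real.log x) - (1 - x) * Real.log (1 - x)) / Real.log 2 - (1 + 2 * x) / 2 :=
    funext phi_eq
  rw [hphi]
  refine hh.congr_deriv ?_
  ring

lemma phi_contAt {α : ℝ} (h0 : 0 < α) (h1 : α < 1) : ContinuousAt phi α :=
  (hasDerivAt_phi h0 h1).continuousAt

lemma phi_mono : StrictMonoOn phi (Set.Ioc 0 (1/3 : ℝ)) := by
  apply strictMonoOn_of_deriv_pos (convex_Ioc _ _)
  · intro x hx
    exact (phi_contAt hx.1 (by linarith [hx.2])).continuousWithinAt
  · rw [interior_Ioc]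
    intro x hx
    obtain ⟨hx0, hx3⟩ := hx
    have h1 : x < 1 := by linarith
    rw [(hasDerivAt_phi hx0 h1).deriv]
    have h2x : Real.log (2 * x) < Real.log (1 - x) :=
      Real.log_lt_log (by linarith) (by linarith)
    rw [Real.log_mul (by norm_num) hx0.ne'] at h2x
    have : 1 < (Real.log (1 - x) - Real.log x) / Real.log 2 :=
      (one_lt_div log2_pos).mpr (by linarith)
    linarith

lemma phi_anti : StrictAntiOn phi (Set.Icc (1/3 : ℝ) (1/2)) := by
  apply strictAntiOn_of_deriv_neg (convex_Icc _ _)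
  · intro x hx
    exact (phi_contAt (by linarith [hx.1]) (by linarith [hx.2])).continuousWithinAt
  · rw [interior_Icc]
    intro x hx
    obtain ⟨hx3, hx2⟩ := hx
    have hx0 : 0 < x := by linarith
    have h1 : x < 1 := by linarith
    rw [(hasDerivAt_phi hx0 h1).deriv]
    have h2x : Real.log (1 - x) < Real.log (2 * x) :=
      Real.log_lt_log (by linarith) (by linarith)
    rw [Real.log_mul (by norm_num) hx0.ne'] at h2x
    have : (Real.log (1 - x) - Real.log x) / Real.log 2 < 1 :=
      (div_lt_one log2_pos).mpr (by linarith)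
    linarith

lemma phi_half : phi (1/2) = 0 := by
  have h : Real.logb 2 (1/2 : ℝ) = -1 := by
    rw [show (1/2 : ℝ) = 2⁻¹ by norm_num, Real.logb_inv,
      Real.logb_self_eq_one (by norm_num)]
  simp only [phi]
  rw [show (1:ℝ) - 1/2 = 1/2 by norm_num, h]
  norm_num

lemma phi_third : 0 < phi (1/3) := by
  rw [phi_eq]
  have h9 : Real.log 8 < Real.log 9 := Real.log_lt_log (by norm_num) (by norm_num)
  rw [show (9:ℝ) = 3^2 by norm_num, show (8:ℝ) = 2^3 by norm_num,
    Real.log_pow, Real.log_pow] at h9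
  have hlog13 : Real.log (1/3 : ℝ) = -Real.log 3 := by
    rw [show (1/3:ℝ) = 3⁻¹ by norm_num, Real.log_inv]
  have hlog23 : Real.log ((1:ℝ) - 1/3) = Real.log 2 - Real.log 3 := by
    rw [show (1:ℝ) - 1/3 = 2/3 by norm_num, Real.log_div (by norm_num) (by norm_num)]
  rw [show (1:ℝ) - 1/3 = 2/3 by norm_num] at *
  rw [hlog13] at *
  rw [hlog23]
  rw [div_sub' log2_pos.ne']
  apply div_pos _ log2_pos
  push_cast at h9
  nlinarith [log2_pos]

lemma phi_sixteenth : phi (1/16) < 0 := by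
  rw [phi_eq]
  have h : Real.log 2048 < Real.log 3375 := Real.log_lt_log (by norm_num) (by norm_num)
  rw [show (2048:ℝ) = 2^11 by norm_num, show (3375:ℝ) = 15^3 by norm_num,
    Real.log_pow, Real.log_pow] at h
  have hlog16 : Real.log (1/16 : ℝ) = -(4 * Real.log 2) := by
    rw [show (1/16:ℝ) = (2^4)⁻¹ by norm_num, Real.log_inv, Real.log_pow]
    push_cast; ring
  have hlog1516 : Real.log ((1:ℝ) - 1/16) = Real.log 15 - 4 * Real.log 2 := by
    rw [show (1:ℝ) - 1/16 = 15/16 by norm_num, Real.log_div (by norm_num) (by norm_num),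
      show (16:ℝ) = 2^4 by norm_num, Real.log_pow]
    push_cast; ring
  rw [hlog16, hlog1516]
  rw [sub_neg, div_lt_div_iff₀ log2_pos (by norm_num : (0:ℝ) < 2)]
  push_cast at h
  nlinarith [log2_pos]

/-- The equation `−α·log₂(α) − (1−α)·log₂(1−α) = (1+2α)/2` has a unique solution in the
open interval `(0, 1/2)`. -/
theorem stmt15 :
    ∃! α : ℝ, 0 < α ∧ α < 1 / 2 ∧
      -α * Real.logb 2 α - (1 - α) * Real.logb 2 (1 - α) = (1 + 2 * α) / 2 := by
  have hcont : ContinuousOn phi (Set.Icc (1/16 : ℝ) (1/3)) := fun x hx =>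
    (phi_contAt (by linarith [hx.1]) (by linarith [hx.2])).continuousWithinAt
  have hIVT := intermediate_value_Icc (by norm_num : (1/16:ℝ) ≤ 1/3) hcont
  have h0mem : (0:ℝ) ∈ Set.Icc (phi (1/16)) (phi (1/3)) :=
    ⟨phi_sixteenth.le, phi_third.le⟩
  obtain ⟨c, hc, hphic⟩ := hIVT h0mem
  have hc0 : 0 < c := by linarith [hc.1]
  have hc3 : c ≤ 1/3 := hc.2
  have hc2 : c < 1/2 := by linarith
  have key : ∀ y : ℝ, 0 < y → y < 1/2 → phi y = 0 → y = c := by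
    intro y hy0 hy2 hyphi
    by_cases hy3 : y ≤ 1/3
    · exact phi_mono.injOn ⟨hy0, hy3⟩ ⟨hc0, hc3⟩ (hyphi.trans hphic.symm)
    · push_neg at hy3
      exfalso
      have := phi_anti ⟨hy3.le, hy2.le⟩ ⟨by norm_num, le_refl _⟩ hy2
      rw [phi_half, hyphi] at this
      exact lt_irrefl 0 this
  refine ⟨c, ⟨hc0, hc2, ?_⟩, ?_⟩
  · have := hphic
    simp only [phi] at this
    linarith
  · rintro y ⟨hy0, hy2, hyeq⟩
    exact key y hy0 hy2 (by simp only [phi]; linarith)
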